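/- arXiv:0902.1909 — 3 statements merged into one kernel-verified Lean document; each statement's English description precedes it below -/
import Mathlib

section
/- Let γ₁,…,γ_m be linearly independent vectors in a real inner product space V with ⟨γ_i,γ_j⟩ ≤ 0 for i ≠ j. Define R₁ = {H ∈ V : H ∈ cone(γ₁,…,γ_m) with nonnegative coefficients, ‖H‖ ≥ 1, and ⟨γ₁,H⟩ ≥ ⟨γ_j,H⟩ for all j}. Let P be the orthogonal projection onto the orthogonal complement of span{γ₂,…,γ_m}. Then there exists a > 0 such that ‖P(H)‖ ≥ a‖H‖ for all H ∈ R₁. -/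
open scoped RealInnerProductSpace

set_option maxHeartbeats 1000000 in
/-- On the region `R₁`, the orthogonal projection `P` onto `span{γ₂,…,γ_m}ᗮ`
satisfies `‖P H‖ ≥ a ‖H‖` for some `a > 0`. -/
theorem stmt5 {V : Type*} [NormedAddCommGroup V] [InnerProductSpace ℝ V]
    [FiniteDimensional ℝ V]
    {m : ℕ} [NeZero m] (γ : Fin m → V) (hind : LinearIndependent ℝ γ)
    (hobtuse : ∀ i j, i ≠ j → ⟪γ i, γ j⟫ ≤ 0)
    (R₁ : Set V)
    (hR₁ : R₁ = {H : V | (∃ c : Fin m → ℝ, (∀ i, 0 ≤ c i) ∧ H = ∑ i, c i • γ i) ∧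
      1 ≤ ‖H‖ ∧ ∀ j, ⟪γ j, H⟫ ≤ ⟪γ 0, H⟫}) :
    ∃ a > 0, ∀ H ∈ R₁,
      a * ‖H‖ ≤
        ‖(Submodule.orthogonalProjection ((Submodule.span ℝ (γ '' {i | i ≠ 0}))ᗮ) H : V)‖ := by
  classical
  subst hR₁
  set S := Submodule.span ℝ (γ '' {i | i ≠ 0}) with hS
  -- projection kills γ j for j ≠ 0
  have hproj0 : ∀ j, j ≠ 0 → (Submodule.orthogonalProjection Sᗮ (γ j) : V) = 0 := by
    intro j hj
    have hmem : γ j ∈ Sᗮᗮ :=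
      S.le_orthogonal_orthogonal (Submodule.subset_span ⟨j, hj, rfl⟩)
    rw [Submodule.orthogonalProjectionOnto_apply_of_mem_orthogonal hmem]
    simp
  -- projection of γ 0 is nonzero
  have hγ0 : (Submodule.orthogonalProjection Sᗮ (γ 0) : V) ≠ 0 := by
    intro h
    have h0 : Submodule.orthogonalProjection Sᗮ (γ 0) = 0 := Subtype.ext (by simpa using h)
    rw [Submodule.orthogonalProjectionOnto_eq_zero_iff, Submodule.orthogonal_orthogonal] at h0
    exact hind.notMem_span_image (by simp) h0
  have hγ0norm : (0:ℝ) < ‖γ 0‖ := by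
    have : γ 0 ≠ 0 := hind.ne_zero 0
    exact norm_pos_iff.mpr this
  -- coefficient bound
  obtain ⟨C, hC0, hC⟩ : ∃ C > 0, ∀ c : Fin m → ℝ,
      (∑ i, |c i|) ≤ C * ‖∑ i, c i • γ i‖ := by
    set T : (Fin m → ℝ) →ₗ[ℝ] V := Fintype.linearCombination ℝ γ with hT
    have hTa : ∀ c, T c = ∑ i, c i • γ i := fun c => rfl
    have hinj : Function.Injective T := by
      rw [← LinearMap.ker_eq_bot, LinearMap.ker_eq_bot']
      intro c hc
      have := (Fintype.linearIndependent_iff.mp hind) c (by rw [← hTa]; exact hc)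
      funext i; exact this i
    set E := LinearEquiv.ofInjective T hinj with hE
    set L : (LinearMap.range T) →L[ℝ] (Fin m → ℝ) :=
      LinearMap.toContinuousLinearMap E.symm.toLinearMap with hL
    refine ⟨m * ‖L‖ + 1, by positivity, fun c => ?_⟩
    have hLc : L ⟨T c, LinearMap.mem_range_self T c⟩ = c := by
      have : (⟨T c, LinearMap.mem_range_self T c⟩ : LinearMap.range T) = E c := rfl
      simp [hL, this]
    have hnorm : ‖c‖ ≤ ‖L‖ * ‖T c‖ := by
      calc ‖c‖ = ‖L ⟨T c, LinearMap.mem_range_self T c⟩‖ := by rw [hLc]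
      _ ≤ ‖L‖ * ‖(⟨T c, LinearMap.mem_range_self T c⟩ : LinearMap.range T)‖ := L.le_opNorm _
      _ = ‖L‖ * ‖T c‖ := rfl
    have hsum : (∑ i, |c i|) ≤ (m : ℝ) * ‖c‖ := by
      calc (∑ i, |c i|) ≤ ∑ _i : Fin m, ‖c‖ :=
            Finset.sum_le_sum fun i _ => by
              simpa using norm_le_pi_norm c i
      _ = (m : ℝ) * ‖c‖ := by simp [mul_comm]
    have hTc : ‖T c‖ = ‖∑ i, c i • γ i‖ := by rw [hTa]
    have hTnn : (0:ℝ) ≤ ‖∑ i, c i • γ i‖ := norm_nonneg _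
    calc (∑ i, |c i|) ≤ (m : ℝ) * ‖c‖ := hsum
    _ ≤ (m : ℝ) * (‖L‖ * ‖T c‖) :=
        mul_le_mul_of_nonneg_left hnorm (Nat.cast_nonneg m)
    _ = (m : ℝ) * ‖L‖ * ‖∑ i, c i • γ i‖ := by rw [hTc]; ring
    _ ≤ ((m : ℝ) * ‖L‖ + 1) * ‖∑ i, c i • γ i‖ := by nlinarith [hTnn]
  refine ⟨‖(Submodule.orthogonalProjection Sᗮ (γ 0) : V)‖ / (C * ‖γ 0‖^2),
    div_pos (norm_pos_iff.mpr hγ0) (by positivity), ?_⟩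
  rintro H ⟨⟨c, hc0, hcH⟩, hH1, hmax⟩
  -- projection of H
  have hPH : (Submodule.orthogonalProjection Sᗮ H : V) = c 0 • (Submodule.orthogonalProjection Sᗮ (γ 0) : V) := by
    rw [hcH]
    rw [map_sum]
    push_cast
    rw [Finset.sum_eq_single 0]
    · rw [map_smul]; rfl
    · intro j _ hj
      rw [map_smul]
      have := hproj0 j hj
      simp [this]
    · simp
  have hPHnorm : ‖(Submodule.orthogonalProjection Sᗮ H : V)‖ = c 0 * ‖(Submodule.orthogonalProjection Sᗮ (γ 0) : V)‖ := by
    rw [hPH, norm_smul, Real.norm_eq_abs, abs_of_nonneg (hc0 0)]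
  -- inner product bound
  have h1 : ⟪γ 0, H⟫ ≤ c 0 * ‖γ 0‖^2 := by
    rw [hcH, inner_sum]
    calc (∑ i, ⟪γ 0, c i • γ i⟫) ≤ ∑ i : Fin m, (if i = 0 then c 0 * ‖γ 0‖^2 else 0) := by
          refine Finset.sum_le_sum fun i _ => ?_
          rw [real_inner_smul_right]
          by_cases hi : i = 0
          · subst hi; simp [real_inner_self_eq_norm_sq]
          · simp only [hi, if_false]
            exact mul_nonpos_of_nonneg_of_nonpos (hc0 i) (hobtuse 0 i (Ne.symm hi))
    _ = c 0 * ‖γ 0‖^2 := by simp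
  have h2 : ‖H‖^2 ≤ (∑ i, c i) * ⟪γ 0, H⟫ := by
    have he : ‖H‖^2 = ∑ i, c i * ⟪γ i, H⟫ := by
      rw [← real_inner_self_eq_norm_sq]
      nth_rewrite 1 [hcH]
      rw [sum_inner]
      exact Finset.sum_congr rfl fun i _ => real_inner_smul_left _ _ _
    rw [he, Finset.sum_mul]
    exact Finset.sum_le_sum fun i _ => mul_le_mul_of_nonneg_left (hmax i) (hc0 i)
  have hsc : (0:ℝ) ≤ ∑ i, c i := Finset.sum_nonneg fun i _ => hc0 i
  have hHpos : (0:ℝ) < ‖H‖ := lt_of_lt_of_le one_pos hH1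
  have hip : 0 < ⟪γ 0, H⟫ := by
    by_contra hle
    push_neg at hle
    have : (∑ i, c i) * ⟪γ 0, H⟫ ≤ 0 := mul_nonpos_of_nonneg_of_nonpos hsc hle
    nlinarith [h2, hH1]
  have h3 : (∑ i, c i) ≤ C * ‖H‖ := by
    have habs : (∑ i, c i) = ∑ i, |c i| :=
      Finset.sum_congr rfl fun i _ => (abs_of_nonneg (hc0 i)).symm
    rw [habs, hcH]
    exact hC c
  have hkey : ‖H‖ ≤ C * (c 0 * ‖γ 0‖^2) := by
    have hmul : (∑ i, c i) * ⟪γ 0, H⟫ ≤ (C * ‖H‖) * (c 0 * ‖γ 0‖^2) :=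
      mul_le_mul h3 h1 (le_of_lt hip) (by positivity)
    nlinarith [h2]
  rw [hPHnorm]
  rw [div_mul_eq_mul_div, div_le_iff₀ (by positivity)]
  nlinarith [mul_le_mul_of_nonneg_left hkey
    (norm_nonneg ((Submodule.orthogonalProjection Sᗮ (γ 0) : V)))]
end

section
/- With the notation of the previous statement, if H ∈ closure(R₁) and P(H) = 0, then ⟨H, γ_j⟩ = 0 for all j = 1,…,m, contradicting ‖H‖ ≥ 1; hence P(H) ≠ 0 on cl(R₁). -/
open scoped RealInnerProductSpace

/-- If `H ∈ cl(R₁)` and `P H = 0` then `⟪H, γ j⟫ = 0` for all `j`; consequently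
`P H ≠ 0` on `cl(R₁)`. -/
theorem stmt6 {V : Type*} [NormedAddCommGroup V] [InnerProductSpace ℝ V]
    [FiniteDimensional ℝ V]
    {m : ℕ} [NeZero m] (γ : Fin m → V) (hind : LinearIndependent ℝ γ)
    (hobtuse : ∀ i j, i ≠ j → ⟪γ i, γ j⟫ ≤ 0)
    (R₁ : Set V)
    (hR₁ : R₁ = {H : V | (∃ c : Fin m → ℝ, (∀ i, 0 ≤ c i) ∧ H = ∑ i, c i • γ i) ∧
      1 ≤ ‖H‖ ∧ ∀ j, ⟪γ j, H⟫ ≤ ⟪γ 0, H⟫})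
    (P : V → V)
    (hP : ∀ H : V,
      P H = (Submodule.orthogonalProjectionOnto ((Submodule.span ℝ (γ '' {i | i ≠ 0}))ᗮ) H : V)) :
    (∀ H ∈ closure R₁, P H = 0 → ∀ j, ⟪H, γ j⟫ = 0) ∧
    ∀ H ∈ closure R₁, P H ≠ 0 := by
  set W : Submodule ℝ V := Submodule.span ℝ (γ '' {i | i ≠ 0}) with hWdef
  -- P H = 0 ↔ H ∈ W
  have hPzero : ∀ H : V, P H = 0 ↔ H ∈ W := by
    intro H
    rw [hP H]
    rw [show ((Submodule.orthogonalProjectionOnto Wᗮ H : Wᗮ) : V) = 0 ↔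
        Submodule.orthogonalProjectionOnto Wᗮ H = 0 from ZeroMemClass.coe_eq_zero,
      Submodule.orthogonalProjectionOnto_eq_zero_iff, Submodule.orthogonal_orthogonal]
  -- the linear map sending coefficients to combinations
  set L : (Fin m → ℝ) →ₗ[ℝ] V := Fintype.linearCombination ℝ γ with hLdef
  have hLapp : ∀ c : Fin m → ℝ, L c = ∑ i, c i • γ i := fun c =>
    Fintype.linearCombination_apply ℝ γ c
  have hLinj : Function.Injective L := by
    rw [← LinearMap.ker_eq_bot, LinearMap.ker_eq_bot']
    intro c hc
    have := Fintype.linearIndependent_iff.mp hind c (by rw [← hLapp]; exact hc)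
    funext i; exact this i
  -- the cone is closed
  have hConeClosed : IsClosed (L '' {c : Fin m → ℝ | ∀ i, 0 ≤ c i}) := by
    apply (L.isClosedEmbedding_of_injective (LinearMap.ker_eq_bot.mpr hLinj)).isClosedMap
    have : {c : Fin m → ℝ | ∀ i, 0 ≤ c i} = ⋂ i, {c : Fin m → ℝ | 0 ≤ c i} := by
      ext c; simp [Set.mem_iInter]
    rw [this]
    exact isClosed_iInter fun i => isClosed_le continuous_const (continuous_apply i)
  -- a closed superset of R₁
  set S : Set V := {H : V | H ∈ L '' {c : Fin m → ℝ | ∀ i, 0 ≤ c i} ∧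
      1 ≤ ‖H‖ ∧ ∀ j, ⟪γ j, H⟫ ≤ ⟪γ 0, H⟫} with hSdef
  have hSclosed : IsClosed S := by
    have h1 : IsClosed {H : V | 1 ≤ ‖H‖} := isClosed_le continuous_const continuous_norm
    have h2 : IsClosed {H : V | ∀ j, ⟪γ j, H⟫ ≤ ⟪γ 0, H⟫} := by
      have : {H : V | ∀ j, ⟪γ j, H⟫ ≤ ⟪γ 0, H⟫} =
          ⋂ j, {H : V | ⟪γ j, H⟫ ≤ ⟪γ 0, H⟫} := by ext H; simp [Set.mem_iInter]
      rw [this]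
      exact isClosed_iInter fun j => isClosed_le
        (continuous_const.inner continuous_id) (continuous_const.inner continuous_id)
    have : S = (L '' {c : Fin m → ℝ | ∀ i, 0 ≤ c i}) ∩
        ({H : V | 1 ≤ ‖H‖} ∩ {H : V | ∀ j, ⟪γ j, H⟫ ≤ ⟪γ 0, H⟫}) := by
      ext H; exact ⟨fun h => ⟨h.1, h.2.1, h.2.2⟩, fun h => ⟨h.1, h.2.1, h.2.2⟩⟩
    rw [this]
    exact hConeClosed.inter (h1.inter h2)
  have hsub : R₁ ⊆ S := by
    intro H hH
    rw [hR₁] at hH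
    obtain ⟨⟨c, hc, hHc⟩, h1, h2⟩ := hH
    exact ⟨⟨c, hc, by rw [hLapp]; exact hHc.symm⟩, h1, h2⟩
  have hclsub : closure R₁ ⊆ S := closure_minimal hsub hSclosed
  -- the key contradiction
  have key : ∀ H ∈ closure R₁, H ∉ W := by
    intro H hH hHW
    obtain ⟨⟨c, hc, hHc⟩, h1, h2⟩ := hclsub hH
    rw [hLapp] at hHc
    -- c 0 = 0
    have hsumW : (∑ i ∈ Finset.univ.erase 0, c i • γ i) ∈ W := by
      apply Submodule.sum_mem
      intro i hi
      exact Submodule.smul_mem _ _ (Submodule.subset_span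
        ⟨i, Finset.ne_of_mem_erase hi, rfl⟩)
    have hsplit : c 0 • γ 0 + ∑ i ∈ Finset.univ.erase 0, c i • γ i = H := by
      rw [← hHc]; exact Finset.add_sum_erase _ (fun i => c i • γ i) (Finset.mem_univ (0 : Fin m))
    have hc0γ : c 0 • γ 0 ∈ W := by
      have : c 0 • γ 0 = H - ∑ i ∈ Finset.univ.erase 0, c i • γ i := by
        rw [← hsplit]; abel
      rw [this]; exact Submodule.sub_mem _ hHW hsumW
    have hc0 : c 0 = 0 := by
      by_contra h0
      have : γ 0 ∈ W := by
        have := Submodule.smul_mem W (c 0)⁻¹ hc0γ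
        rwa [smul_smul, inv_mul_cancel₀ h0, one_smul] at this
      exact hind.notMem_span_image (by simp : (0 : Fin m) ∉ {i | i ≠ 0}) this
    -- ⟪γ 0, H⟫ ≤ 0
    have hγ0H : ⟪γ 0, H⟫ ≤ 0 := by
      rw [← hHc, inner_sum]
      apply Finset.sum_nonpos
      intro i _
      rw [real_inner_smul_right]
      rcases eq_or_ne i 0 with h | h
      · subst h; rw [hc0]; simp
      · exact mul_nonpos_of_nonneg_of_nonpos (hc i) (hobtuse 0 i (Ne.symm h))
    -- ‖H‖² ≤ 0 yet ‖H‖ ≥ 1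
    have hn : ‖H‖ * ‖H‖ = ∑ j, c j * ⟪γ j, H⟫ := by
      rw [← real_inner_self_eq_norm_mul_norm]
      conv_lhs => rw [← hHc]
      rw [sum_inner]
      congr 1; ext j; rw [real_inner_smul_left, hHc]
    have hle : ‖H‖ * ‖H‖ ≤ 0 := by
      rw [hn]
      apply Finset.sum_nonpos
      intro j _
      exact mul_nonpos_of_nonneg_of_nonpos (hc j) (le_trans (h2 j) hγ0H)
    nlinarith
  constructor
  · intro H hH hPH j
    exact absurd ((hPzero H).mp hPH) (key H hH)
  · intro H hH hPH
    exact absurd ((hPzero H).mp hPH) (key H hH)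
end

section
/- For every irreducible root system Φ of rank n and every proper simple subroot system Ψ of Φ with m simple roots (m < n), one has n/|Φ| < m/|Ψ|. -/
open scoped RealInnerProductSpace Classical

noncomputable section StmtAux

variable {V : Type*} [NormedAddCommGroup V] [InnerProductSpace ℝ V]

/-- reflection in `α` -/
def stmt18rf (α x : V) : V := x - (2 * ⟪x, α⟫ / ⟪α, α⟫) • α

lemma stmt18rf_selfadj (α x y : V) : ⟪stmt18rf α x, y⟫ = ⟪x, stmt18rf α y⟫ := by
  simp only [stmt18rf, inner_sub_left, inner_sub_right, real_inner_smul_left,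
    real_inner_smul_right]
  rw [real_inner_comm α y]
  ring

lemma stmt18rf_inner (α x y : V) (hα : ⟪α, α⟫ ≠ (0:ℝ)) :
    ⟪stmt18rf α x, stmt18rf α y⟫ = ⟪x, y⟫ := by
  simp only [stmt18rf, inner_sub_left, inner_sub_right, real_inner_smul_left,
    real_inner_smul_right]
  rw [real_inner_comm α y]
  field_simp
  ring

lemma stmt18rf_invol (α x : V) (hα : ⟪α, α⟫ ≠ (0:ℝ)) :
    stmt18rf α (stmt18rf α x) = x := by
  simp only [stmt18rf, inner_sub_left, real_inner_smul_left, sub_smul, smul_smul]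
  have : (2 * (⟪x, α⟫ - 2 * ⟪x, α⟫ / ⟪α, α⟫ * ⟪α, α⟫) / ⟪α, α⟫) = - (2 * ⟪x, α⟫ / ⟪α, α⟫) := by
    field_simp; ring
  rw [this]
  module

lemma stmt18rf_smul (α : V) (c : ℝ) (x : V) :
    stmt18rf α (c • x) = c • stmt18rf α x := by
  simp only [stmt18rf, real_inner_smul_left, smul_sub, smul_smul]
  ring_nf

/-- reflection as a linear map -/
def stmt18rfL (α : V) : V →ₗ[ℝ] V :=
  LinearMap.id - (2 / ⟪α, α⟫) • ((innerₛₗ ℝ α).smulRight α)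

lemma stmt18rfL_apply (α x : V) : stmt18rfL α x = stmt18rf α x := by
  have h : (2 / ⟪α, α⟫) * ⟪α, x⟫ = 2 * ⟪x, α⟫ / ⟪α, α⟫ := by
    rw [real_inner_comm α x]; ring
  simp [stmt18rfL, stmt18rf, smul_smul, h]
  congr 1; rw [real_inner_comm α x]; ring

/-- the averaging operator -/
def stmt18T (Φ : Finset V) : V →ₗ[ℝ] V :=
  ∑ γ ∈ Φ, (⟪γ, γ⟫)⁻¹ • ((innerₛₗ ℝ γ).smulRight γ)

lemma stmt18T_apply (Φ : Finset V) (x : V) :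
    stmt18T Φ x = ∑ γ ∈ Φ, (⟪γ, x⟫ / ⟪γ, γ⟫) • γ := by
  simp [stmt18T, LinearMap.sum_apply, smul_smul, div_eq_inv_mul]

lemma stmt18T_inner (Φ : Finset V) (x y : V) :
    ⟪stmt18T Φ x, y⟫ = ∑ γ ∈ Φ, ⟪γ, x⟫ * ⟪γ, y⟫ / ⟪γ, γ⟫ := by
  rw [stmt18T_apply, sum_inner]
  refine Finset.sum_congr rfl fun γ _ => ?_
  rw [real_inner_smul_left]; ring

lemma stmt18T_symm (Φ : Finset V) : (stmt18T Φ).IsSymmetric := by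
  intro x y
  rw [stmt18T_inner, real_inner_comm, stmt18T_inner]
  refine Finset.sum_congr rfl fun γ _ => ?_
  ring

end StmtAux


/-- Lemma 3: for an irreducible root system `Φ` with base `Δ` of cardinality `n`, and a
proper simple subroot system `Ψ = span_ℤ(S) ∩ Φ` for `S ⊊ Δ` with `m = |S|` simple roots,
one has `n/|Φ| < m/|Ψ|`. -/
theorem stmt18 {V : Type*} [NormedAddCommGroup V] [InnerProductSpace ℝ V]
    [FiniteDimensional ℝ V]
    (Φ : Finset V) (h0 : (0 : V) ∉ Φ)
    (hneg : ∀ α ∈ Φ, -α ∈ Φ)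
    (hrefl : ∀ α ∈ Φ, ∀ β ∈ Φ, β - (2 * ⟪β, α⟫ / ⟪α, α⟫) • α ∈ Φ)
    (hcrys : ∀ α ∈ Φ, ∀ β ∈ Φ, ∃ z : ℤ, 2 * ⟪β, α⟫ / ⟪α, α⟫ = (z : ℝ))
    (hspan : Submodule.span ℝ (Φ : Set V) = ⊤)
    (hirr : ∀ S ⊆ Φ, (∀ α ∈ S, ∀ β ∈ Φ, β ∉ S → ⟪α, β⟫ = 0) → S = ∅ ∨ S = Φ)
    -- `Δ` is a base of `Φ`
    (Δ : Finset V) (hΔΦ : Δ ⊆ Φ)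
    (hΔind : LinearIndependent ℝ (fun β : {x // x ∈ Δ} => (β : V)))
    (hbase : ∀ α ∈ Φ,
      (∃ a : V → ℤ, (∀ β ∈ Δ, 0 ≤ a β) ∧ α = ∑ β ∈ Δ, (a β : ℝ) • β) ∨
      (∃ a : V → ℤ, (∀ β ∈ Δ, a β ≤ 0) ∧ α = ∑ β ∈ Δ, (a β : ℝ) • β))
    -- `S` is a proper nonempty subset of the base, giving the simple subroot system `Ψ`
    (S : Finset V) (hSΔ : S ⊆ Δ) (hSne : S.Nonempty) (hproper : S ≠ Δ)
    (Ψ : Finset V)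
    (hΨ : Ψ = Φ.filter (fun α => α ∈ Submodule.span ℤ (S : Set V))) :
    (Δ.card : ℝ) / Φ.card < (S.card : ℝ) / Ψ.card := by
  classical
  have hne0 : ∀ γ ∈ Φ, γ ≠ 0 := fun γ hγ h => h0 (h ▸ hγ)
  have hq : ∀ γ ∈ Φ, ⟪γ, γ⟫ ≠ (0:ℝ) := fun γ hγ =>
    fun h => hne0 γ hγ (inner_self_eq_zero.mp h)
  have hqpos : ∀ γ ∈ Φ, (0:ℝ) < ⟪γ, γ⟫ := fun γ hγ =>
    lt_of_le_of_ne real_inner_self_nonneg (Ne.symm (hq γ hγ))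
  set T := stmt18T Φ with hTdef
  -- reflections map Φ to Φ
  have hrf : ∀ α ∈ Φ, ∀ β ∈ Φ, stmt18rf α β ∈ Φ := fun α hα β hβ => by
    have := hrefl α hα β hβ; simpa [stmt18rf] using this
  -- T commutes with reflections
  have hcomm : ∀ α ∈ Φ, ∀ x : V, T (stmt18rf α x) = stmt18rf α (T x) := by
    intro α hα x
    have hlin : stmt18rf α (T x) = ∑ γ ∈ Φ, (⟪γ, x⟫ / ⟪γ, γ⟫) • stmt18rf α γ := by
      rw [← stmt18rfL_apply, stmt18T_apply, map_sum]
      simp only [map_smul, stmt18rfL_apply]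
    rw [hlin, stmt18T_apply]
    refine Finset.sum_nbij' (i := fun γ => stmt18rf α γ) (j := fun γ => stmt18rf α γ)
      (fun γ hγ => hrf α hα γ hγ) (fun γ hγ => hrf α hα γ hγ)
      (fun γ _ => stmt18rf_invol α γ (hq α hα)) (fun γ _ => stmt18rf_invol α γ (hq α hα))
      (fun γ _ => ?_)
    rw [stmt18rf_invol α γ (hq α hα), stmt18rf_inner α γ γ (hq α hα),
      (stmt18rf_selfadj α γ x).symm]
  -- an eigenvalue of T
  have hVnt : Nontrivial V := by
    obtain ⟨s₀, hs₀⟩ := hSne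
    exact nontrivial_of_ne s₀ 0 (hne0 s₀ (hΔΦ (hSΔ hs₀)))
  obtain ⟨μ, hμ⟩ : ∃ μ : ℝ, Module.End.HasEigenvalue T μ :=
    ⟨_, (stmt18T_symm Φ).hasEigenvalue_iSup_of_finiteDimensional⟩
  obtain ⟨x₀, hx₀E, hx₀ne⟩ := hμ.exists_hasEigenvector
  set E := Module.End.eigenspace T μ with hEdef
  have hEref : ∀ α ∈ Φ, ∀ x ∈ E, stmt18rf α x ∈ E := by
    intro α hα x hx
    rw [Module.End.mem_eigenspace_iff] at hx ⊢
    rw [hcomm α hα, hx, stmt18rf_smul]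
  have hdich : ∀ γ ∈ Φ, γ ∈ E ∨ ∀ x ∈ E, ⟪γ, x⟫ = 0 := by
    intro γ hγ
    by_cases h : ∀ x ∈ E, ⟪γ, x⟫ = 0
    · exact Or.inr h
    · left
      push_neg at h
      obtain ⟨x, hxE, hxne⟩ := h
      have h1 : x - stmt18rf γ x ∈ E := E.sub_mem hxE (hEref γ hγ x hxE)
      have h2 : x - stmt18rf γ x = (2 * ⟪x, γ⟫ / ⟪γ, γ⟫) • γ := by
        simp [stmt18rf]
      have hc : (2 * ⟪x, γ⟫ / ⟪γ, γ⟫) ≠ 0 := by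
        have h3 : ⟪x, γ⟫ ≠ 0 := by rw [real_inner_comm]; exact hxne
        exact div_ne_zero (by positivity) (hq γ hγ)
      have h4 := E.smul_mem (2 * ⟪x, γ⟫ / ⟪γ, γ⟫)⁻¹ (h2 ▸ h1)
      rwa [inv_smul_smul₀ hc] at h4
  -- T = μ • id
  have hscal : ∀ x : V, T x = μ • x := by
    have hcond : ∀ α ∈ Φ.filter (fun γ => γ ∈ E), ∀ β ∈ Φ,
        β ∉ Φ.filter (fun γ => γ ∈ E) → ⟪α, β⟫ = 0 := by
      intro α hα β hβ hβn
      rw [Finset.mem_filter] at hα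
      have hβE : β ∉ E := fun h => hβn (Finset.mem_filter.mpr ⟨hβ, h⟩)
      rcases hdich β hβ with h | h
      · exact absurd h hβE
      · rw [real_inner_comm]; exact h α hα.2
    rcases hirr _ (Finset.filter_subset _ _) hcond with hA | hA
    · exfalso
      have horth : ∀ γ ∈ Φ, ⟪γ, x₀⟫ = 0 := by
        intro γ hγ
        have hγE : γ ∉ E := by
          intro h
          have : γ ∈ Φ.filter (fun γ => γ ∈ E) := Finset.mem_filter.mpr ⟨hγ, h⟩
          rw [hA] at this; exact absurd this (Finset.notMem_empty γ)
        rcases hdich γ hγ with h | h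
        · exact absurd h hγE
        · exact h x₀ hx₀E
      have hzero : ∀ v ∈ Submodule.span ℝ (Φ : Set V), ⟪v, x₀⟫ = 0 := by
        intro v hv
        induction hv using Submodule.span_induction with
        | mem x hx => exact horth x hx
        | zero => exact inner_zero_left x₀
        | add x y hx hy ihx ihy => rw [inner_add_left, ihx, ihy, add_zero]
        | smul a x hx ih => rw [real_inner_smul_left, ih, mul_zero]
      have : ⟪x₀, x₀⟫ = (0:ℝ) := hzero x₀ (by rw [hspan]; trivial)
      exact hx₀ne (inner_self_eq_zero.mp this)
    · have hub : Submodule.span ℝ (Φ : Set V) ≤ E := by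
        rw [Submodule.span_le]
        intro γ hγ
        have hγΦ : γ ∈ Φ := hγ
        have : γ ∈ Φ.filter (fun γ => γ ∈ E) := by rw [hA]; exact hγΦ
        exact (Finset.mem_filter.mp this).2
      rw [hspan] at hub
      intro x
      have hx : x ∈ E := hub trivial
      exact Module.End.mem_eigenspace_iff.mp hx
  -- dimension facts
  have hΔspan : Submodule.span ℝ (Δ : Set V) = ⊤ := by
    rw [eq_top_iff, ← hspan, Submodule.span_le]
    intro α hα
    rcases hbase α hα with ⟨a, _, ha⟩ | ⟨a, _, ha⟩ <;>
    · rw [ha]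
      exact Submodule.sum_mem _ fun β hβ =>
        Submodule.smul_mem _ _ (Submodule.subset_span (Finset.mem_coe.mpr hβ))
  have hΔindset : LinearIndependent ℝ (fun x : (Δ : Set V) => (x : V)) := hΔind
  have hn : Δ.card = Module.finrank ℝ V := by
    have h1 := finrank_span_finset_eq_card (R := ℝ) (s := Δ) hΔind
    rw [hΔspan, finrank_top] at h1
    exact h1.symm
  have hSind : LinearIndependent ℝ (fun x : (S : Set V) => (x : V)) :=
    LinearIndepOn.mono (R := ℝ) (v := id) (s := (Δ : Set V)) hΔindset (by exact_mod_cast hSΔ)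
  set W := Submodule.span ℝ (S : Set V) with hWdef
  have hm : Module.finrank ℝ W = S.card := finrank_span_finset_eq_card hSind
  -- orthonormal bases
  let bV := stdOrthonormalBasis ℝ V
  let bW := stdOrthonormalBasis ℝ W
  let f : Fin (Module.finrank ℝ W) → V := fun j => (bW j : V)
  have hf : Orthonormal ℝ f := by
    have hb := (stdOrthonormalBasis ℝ W).orthonormal
    constructor
    · intro j; exact hb.1 j
    · intro i j hij
      have h : (inner ℝ ((stdOrthonormalBasis ℝ W) i) ((stdOrthonormalBasis ℝ W) j) : ℝ) = 0 :=
        hb.2 hij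
      rw [Submodule.coe_inner] at h
      exact h
  have hTinner : ∀ x : V, ⟪T x, x⟫ = μ * ⟪x, x⟫ := fun x => by
    rw [hscal x, real_inner_smul_left]
  -- trace identity over V : μ * n = |Φ|
  have hA : μ * (Δ.card : ℝ) = (Φ.card : ℝ) := by
    have h2 : ∑ i, ⟪T (bV i), bV i⟫ = μ * (Module.finrank ℝ V : ℝ) := by
      have h1 : ∀ i, ⟪T (bV i), bV i⟫ = μ := fun i => by
        rw [hTinner, real_inner_self_eq_norm_mul_norm, (stdOrthonormalBasis ℝ V).orthonormal.1 i]
        ring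
      rw [Finset.sum_congr rfl fun i _ => h1 i, Finset.sum_const, Finset.card_univ,
        Fintype.card_fin, nsmul_eq_mul, mul_comm]
    have h3 : ∑ i, ⟪T (bV i), bV i⟫ = (Φ.card : ℝ) := by
      rw [Finset.sum_congr rfl fun i (_ : i ∈ Finset.univ) => stmt18T_inner Φ (bV i) (bV i),
        Finset.sum_comm]
      have h4 : ∀ γ ∈ Φ, ∑ i, ⟪γ, bV i⟫ * ⟪γ, bV i⟫ / ⟪γ, γ⟫ = 1 := by
        intro γ hγ
        rw [← Finset.sum_div]
        have h5 : ∑ i, ⟪γ, bV i⟫ * ⟪γ, bV i⟫ = ⟪γ, γ⟫ := by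
          rw [← bV.sum_inner_mul_inner γ γ]
          exact Finset.sum_congr rfl fun i _ => by rw [real_inner_comm (bV i) γ]
        rw [h5, div_self (hq γ hγ)]
      rw [Finset.sum_congr rfl h4, Finset.sum_const, nsmul_eq_mul, mul_one]
    rw [hn, ← h2, h3]
  -- trace identity over W : μ * m = ∑ r
  set r : V → ℝ := fun γ => (∑ j, ⟪γ, f j⟫ * ⟪γ, f j⟫) / ⟪γ, γ⟫ with hrdef
  have hB : μ * (S.card : ℝ) = ∑ γ ∈ Φ, r γ := by
    have h2 : ∑ j, ⟪T (f j), f j⟫ = μ * (S.card : ℝ) := by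
      have h1 : ∀ j, ⟪T (f j), f j⟫ = μ := fun j => by
        rw [hTinner, real_inner_self_eq_norm_mul_norm, hf.1 j]; ring
      rw [Finset.sum_congr rfl fun j _ => h1 j, Finset.sum_const, Finset.card_univ,
        Fintype.card_fin, hm, nsmul_eq_mul, mul_comm]
    have h3 : ∑ j, ⟪T (f j), f j⟫ = ∑ γ ∈ Φ, r γ := by
      rw [Finset.sum_congr rfl fun j (_ : j ∈ Finset.univ) => stmt18T_inner Φ (f j) (f j),
        Finset.sum_comm]
      exact Finset.sum_congr rfl fun γ _ => by rw [hrdef, ← Finset.sum_div]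
    rw [← h2, h3]
  have hΨΦ : Ψ ⊆ Φ := by rw [hΨ]; exact Finset.filter_subset _ _
  have hΨW : ∀ γ ∈ Ψ, γ ∈ W := by
    intro γ hγ
    rw [hΨ, Finset.mem_filter] at hγ
    exact Submodule.span_subset_span ℤ ℝ _ hγ.2
  have hr0 : ∀ γ ∈ Φ, 0 ≤ r γ := fun γ hγ =>
    div_nonneg (Finset.sum_nonneg fun j _ => mul_self_nonneg _) (le_of_lt (hqpos γ hγ))
  have hr1 : ∀ γ ∈ Ψ, r γ = 1 := by
    intro γ hγ
    have hγΦ := hΨΦ hγ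
    have hγW := hΨW γ hγ
    have h5 : ∑ j, ⟪γ, f j⟫ * ⟪γ, f j⟫ = ⟪γ, γ⟫ := by
      have h6 := bW.sum_inner_mul_inner (⟨γ, hγW⟩ : W) ⟨γ, hγW⟩
      simp only [Submodule.coe_inner] at h6
      rw [← h6]
      exact Finset.sum_congr rfl fun j _ => by rw [real_inner_comm (f j) γ]
    rw [hrdef]
    show (∑ j, ⟪γ, f j⟫ * ⟪γ, f j⟫) / ⟪γ, γ⟫ = 1
    rw [h5, div_self (hq γ hγΦ)]
  -- a root outside Ψ not orthogonal to W
  obtain ⟨γ₀, hγ₀Φ, hγ₀Ψ, w, hwW, hwne⟩ :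
      ∃ γ₀ ∈ Φ, γ₀ ∉ Ψ ∧ ∃ w ∈ W, ⟪γ₀, w⟫ ≠ 0 := by
    by_contra hcon
    push_neg at hcon
    rcases hirr Ψ hΨΦ (fun α hα β hβ hβΨ => by
      rw [real_inner_comm]; exact hcon β hβ hβΨ α (hΨW α hα)) with h | h
    · obtain ⟨s₀, hs₀⟩ := hSne
      have hmem : s₀ ∈ Ψ := by
        rw [hΨ, Finset.mem_filter]
        exact ⟨hΔΦ (hSΔ hs₀), Submodule.subset_span (Finset.mem_coe.mpr hs₀)⟩
      rw [h] at hmem; exact absurd hmem (Finset.notMem_empty s₀)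
    · obtain ⟨δ, hδΔ, hδS⟩ := Finset.exists_of_ssubset (hSΔ.ssubset_of_ne hproper)
      have hδΨ : δ ∈ Ψ := by rw [h]; exact hΔΦ hδΔ
      have hδW : δ ∈ W := hΨW δ hδΨ
      have hnot := hΔind.notMem_span_image (s := {b : {x // x ∈ Δ} | (b : V) ∈ S})
        (x := ⟨δ, hδΔ⟩) (by simpa using hδS)
      apply hnot
      refine Submodule.span_mono ?_ hδW
      intro y hy
      have hyΔ : y ∈ Δ := hSΔ (Finset.mem_coe.mp hy)
      exact ⟨⟨y, hyΔ⟩, by simpa using hy, rfl⟩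
  have hrpos : 0 < r γ₀ := by
    have hnum : 0 < ∑ j, ⟪γ₀, f j⟫ * ⟪γ₀, f j⟫ := by
      have hex : ∃ j, ⟪γ₀, f j⟫ ≠ 0 := by
        by_contra hall
        push_neg at hall
        apply hwne
        have hw2 := bW.sum_repr' (⟨w, hwW⟩ : W)
        have hw3 : w = ∑ j, ⟪f j, w⟫ • f j := by
          have h7 := congrArg (Subtype.val) hw2
          simp only [Submodule.coe_inner] at h7
          simpa [f] using h7.symm
        rw [hw3, inner_sum]
        refine Finset.sum_eq_zero fun j _ => ?_
        rw [real_inner_smul_right, hall j, mul_zero]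
      obtain ⟨j, hj⟩ := hex
      exact Finset.sum_pos' (fun j _ => mul_self_nonneg _)
        ⟨j, Finset.mem_univ j, mul_self_pos.mpr hj⟩
    exact div_pos hnum (hqpos γ₀ hγ₀Φ)
  have hsum : (Ψ.card : ℝ) < μ * S.card := by
    rw [hB]
    have h1 : ∑ γ ∈ insert γ₀ Ψ, r γ ≤ ∑ γ ∈ Φ, r γ :=
      Finset.sum_le_sum_of_subset_of_nonneg
        (Finset.insert_subset hγ₀Φ hΨΦ) (fun γ hγ _ => hr0 γ hγ)
    have h2 : ∑ γ ∈ insert γ₀ Ψ, r γ = r γ₀ + ∑ γ ∈ Ψ, r γ := Finset.sum_insert hγ₀Ψ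
    have h3 : ∑ γ ∈ Ψ, r γ = (Ψ.card : ℝ) := by
      rw [Finset.sum_congr rfl hr1, Finset.sum_const, nsmul_eq_mul, mul_one]
    linarith
  -- conclusion
  obtain ⟨s₀, hs₀⟩ := hSne
  have hs₀Ψ : s₀ ∈ Ψ := by
    rw [hΨ, Finset.mem_filter]
    exact ⟨hΔΦ (hSΔ hs₀), Submodule.subset_span (Finset.mem_coe.mpr hs₀)⟩
  have hΦpos : (0:ℝ) < Φ.card :=
    Nat.cast_pos.mpr (Finset.card_pos.mpr ⟨s₀, hΔΦ (hSΔ hs₀)⟩)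
  have hΨpos : (0:ℝ) < Ψ.card := Nat.cast_pos.mpr (Finset.card_pos.mpr ⟨s₀, hs₀Ψ⟩)
  have hΔpos : (0:ℝ) < Δ.card := Nat.cast_pos.mpr (Finset.card_pos.mpr ⟨s₀, hSΔ hs₀⟩)
  rw [div_lt_div_iff₀ hΦpos hΨpos]
  calc (Δ.card : ℝ) * Ψ.card < Δ.card * (μ * S.card) := mul_lt_mul_of_pos_left hsum hΔpos
    _ = (μ * Δ.card) * S.card := by ring
    _ = (Φ.card : ℝ) * S.card := by rw [hA]
    _ = (S.card : ℝ) * Φ.card := by ring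
end
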